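/- Let I ⊂ S be a strongly stable ideal with all generators x^a satisfying ν(x^a) ≤ n, and set l := ν(I) = max{ν(m) : m ∈ G(I)}. If x^a ∈ G(I) with ν(x^a) = l, then m^{â} is an irreducible component of I, where â = (a_1+1, a_2+1, ..., a_{l−1}+1, a_l). Conversely, if m^b is an irreducible component of I of height l with b ∈ (Z_{>0})^l, then x^{b~} ∈ G(I), where b~ = (b_1−1, ..., b_{l−1}−1, b_l). -/
import Mathlib


open MvPolynomial Classical

noncomputable section

/-- The monomial `x^a` with coefficient `1`. -/
def mon {σ : Type*} (k : Type*) [Field k] (a : σ →₀ ℕ) : MvPolynomial σ k :=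
  MvPolynomial.monomial a 1

/-- `x^a` for an exponent vector given as a function on a finite type. -/
def monF {σ : Type*} [Fintype σ] (k : Type*) [Field k] (a : σ → ℕ) : MvPolynomial σ k :=
  mon k (Finsupp.equivFunOnFinite.symm a)

/-- A monomial ideal: an ideal generated by monomials. -/
def IsMonomialIdeal {σ : Type*} [Fintype σ] {k : Type*} [Field k]
    (I : Ideal (MvPolynomial σ k)) : Prop :=
  ∃ A : Set (σ → ℕ), I = Ideal.span ((monF k) '' A)

/-- The set `G(I)` of (exponent vectors of) minimal monomial generators of a monomial
ideal `I`: monomials in `I` such that dividing by any variable leaves `I`. -/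
def minGens {σ : Type*} [Fintype σ] {k : Type*} [Field k]
    (I : Ideal (MvPolynomial σ k)) : Set (σ → ℕ) :=
  {a | monF k a ∈ I ∧ ∀ i : σ, 0 < a i → monF k (a - Pi.single i 1) ∉ I}

/-- The total degree `|a|` of an exponent vector. -/
def degV {σ : Type*} [Fintype σ] (a : σ → ℕ) : ℕ := ∑ i, a i

/-- A strongly stable (monomial) ideal in `k[x_1, …, x_n]`. -/
def StronglyStable {n : ℕ} {k : Type*} [Field k]
    (I : Ideal (MvPolynomial (Fin n) k)) : Prop :=
  IsMonomialIdeal I ∧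
    ∀ a ∈ minGens I, ∀ i j : Fin n, j < i → 0 < a i →
      monF k (a - Pi.single i 1 + Pi.single j 1) ∈ I

/-- All minimal generators of `I` have degree at most `d`. -/
def GensDegLE {σ : Type*} [Fintype σ] {k : Type*} [Field k]
    (I : Ideal (MvPolynomial σ k)) (d : ℕ) : Prop :=
  ∀ a ∈ minGens I, degV a ≤ d

/-- `psum a i = a_1 + ⋯ + a_{i-1}` (the partial sum over indices `< i`). -/
def psum {n : ℕ} (a : Fin n → ℕ) (i : Fin n) : ℕ :=
  ∑ j ∈ Finset.univ.filter (fun j => j < i), a j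

/-- The exponent vector of the alternative polarization `b-pol(x^a)`:
`b-pol(x^a) = ∏_{1 ≤ i ≤ n, b_{i-1}+1 ≤ j ≤ b_i} x_{i,j}` where `b_i = a_1 + ⋯ + a_i`. -/
def bpolExp {n : ℕ} (d : ℕ) (a : Fin n → ℕ) : Fin n × Fin d → ℕ := fun p =>
  if psum a p.1 ≤ (p.2 : ℕ) ∧ (p.2 : ℕ) < psum a p.1 + a p.1 then 1 else 0

/-- The alternative polarization `b-pol(I) ⊆ k[x_{i,j}]` of a monomial ideal `I`. -/
def bpolIdeal {n : ℕ} (d : ℕ) {k : Type*} [Field k]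
    (I : Ideal (MvPolynomial (Fin n) k)) : Ideal (MvPolynomial (Fin n × Fin d) k) :=
  Ideal.span {q | ∃ a ∈ minGens I, q = monF k (bpolExp d a)}

/-- The prime monomial ideal `(x_i : i ∈ F)`. -/
def varIdeal {σ : Type*} (k : Type*) [Field k] (F : Set σ) : Ideal (MvPolynomial σ k) :=
  Ideal.span (MvPolynomial.X '' F)

/-- `F` gives an irreducible component `(x_i : i ∈ F)` of the squarefree monomial ideal `J`,
i.e. `F` is minimal among subsets with `J ⊆ (x_i : i ∈ F)`. -/
def IsIrredCompSF {σ : Type*} {k : Type*} [Field k]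
    (J : Ideal (MvPolynomial σ k)) (F : Set σ) : Prop :=
  J ≤ varIdeal k F ∧ ∀ F' ⊆ F, J ≤ varIdeal k F' → F' = F

/-- The Alexander dual of a squarefree monomial ideal: the ideal generated by the
monomials `∏_{i ∈ F} x_i` over the irreducible components `(x_i : i ∈ F)` of `J`. -/
def adual {σ : Type*} [Fintype σ] {k : Type*} [Field k]
    (J : Ideal (MvPolynomial σ k)) : Ideal (MvPolynomial σ k) :=
  Ideal.span {q | ∃ F : Set σ, IsIrredCompSF J F ∧
    q = monF k (fun i => if i ∈ F then 1 else 0)}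

/-- Transpose `x_{i,j} ↦ y_{j,i}` of an ideal of `k[x_{i,j}]`. -/
def transposeIdeal {n d : ℕ} {k : Type*} [Field k]
    (J : Ideal (MvPolynomial (Fin n × Fin d) k)) : Ideal (MvPolynomial (Fin d × Fin n) k) :=
  Ideal.map (MvPolynomial.rename (Prod.swap : Fin n × Fin d → Fin d × Fin n)
    : MvPolynomial (Fin n × Fin d) k →ₐ[k] MvPolynomial (Fin d × Fin n) k) J

end

noncomputable section

/-- `Q` is an irreducible component of the monomial ideal `I`: `Q` occurs in the (unique)
irredundant irreducible decomposition of `I`, equivalently `I = Q ∩ J` for some ideal `J`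
not contained in `Q`. -/
def IsComponentOf {n : ℕ} {k : Type*} [Field k]
    (Q I : Ideal (MvPolynomial (Fin n) k)) : Prop :=
  ∃ J : Ideal (MvPolynomial (Fin n) k), I = Q ⊓ J ∧ ¬ J ≤ Q

namespace CompAux

variable {σ : Type*} [Fintype σ] {k : Type*} [Field k]

lemma symm_apply (a : σ → ℕ) (i : σ) : (Finsupp.equivFunOnFinite.symm a) i = a i := rfl

lemma mem_span_monF_iff {A : Set (σ → ℕ)} {p : MvPolynomial σ k} :
    p ∈ Ideal.span ((monF k) '' A) ↔
      ∀ c ∈ p.support, ∃ a ∈ A, ∀ i, a i ≤ c i := by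
  have h : (monF k) '' A =
      (fun s => MvPolynomial.monomial s (1 : k)) '' (Finsupp.equivFunOnFinite.symm '' A) := by
    rw [Set.image_image]; rfl
  rw [h, MvPolynomial.mem_ideal_span_monomial_image]
  constructor
  · intro H c hc
    obtain ⟨s, ⟨a, ha, rfl⟩, hs⟩ := H c hc
    exact ⟨a, ha, fun i => by simpa [symm_apply] using Finsupp.le_def.mp hs i⟩
  · intro H c hc
    obtain ⟨a, ha, hle⟩ := H c hc
    exact ⟨_, ⟨a, ha, rfl⟩, Finsupp.le_def.mpr fun i => by simpa [symm_apply] using hle i⟩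

lemma monF_mul (u v : σ → ℕ) : monF k u * monF k v = monF k (u + v) := by
  have h : Finsupp.equivFunOnFinite.symm (u + v)
      = Finsupp.equivFunOnFinite.symm u + Finsupp.equivFunOnFinite.symm v := by
    ext i; simp [symm_apply]
  simp [monF, mon, MvPolynomial.monomial_mul, h]

lemma monF_mem_of_le {I : Ideal (MvPolynomial σ k)} {g c : σ → ℕ}
    (hg : monF k g ∈ I) (h : ∀ i, g i ≤ c i) : monF k c ∈ I := by
  have hcg : monF k c = monF k (c - g) * monF k g := by
    rw [monF_mul]
    congr 1
    funext i
    have := h i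
    simp only [Pi.add_apply, Pi.sub_apply]
    omega
  rw [hcg]
  exact I.mul_mem_left _ hg

lemma exists_minGen_le {I : Ideal (MvPolynomial σ k)} {c : σ → ℕ}
    (hc : monF k c ∈ I) : ∃ g ∈ minGens I, ∀ i, g i ≤ c i := by
  generalize hN : degV c = N
  induction N using Nat.strong_induction_on generalizing c with
  | _ N ih =>
    by_cases hmin : c ∈ minGens I
    · exact ⟨c, hmin, fun i => le_rfl⟩
    · simp only [minGens, Set.mem_setOf_eq, not_and, not_forall] at hmin
      obtain ⟨i, hi, hin⟩ := hmin hc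
      rw [not_not] at hin
      have hdeg : degV (c - Pi.single i 1) < N := by
        subst hN
        unfold degV
        refine Finset.sum_lt_sum (fun j _ => ?_) ⟨i, Finset.mem_univ i, ?_⟩
        · simp only [Pi.sub_apply]; omega
        · simp only [Pi.sub_apply, Pi.single_eq_same]; omega
      obtain ⟨g, hg, hle⟩ := ih _ hdeg hin rfl
      refine ⟨g, hg, fun j => le_trans (hle j) ?_⟩
      simp only [Pi.sub_apply]; omega

lemma monF_minGen_mem {I : Ideal (MvPolynomial σ k)} {g : σ → ℕ}
    (hg : g ∈ minGens I) : monF k g ∈ I := hg.1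

lemma span_minGens {I : Ideal (MvPolynomial σ k)} (hI : IsMonomialIdeal I) :
    I = Ideal.span ((monF k) '' minGens I) := by
  obtain ⟨A, hA⟩ := hI
  apply le_antisymm
  · conv_lhs => rw [hA]
    rw [Ideal.span_le]
    rintro q ⟨a, ha, rfl⟩
    have haI : monF k a ∈ I := by rw [hA]; exact Ideal.subset_span ⟨a, ha, rfl⟩
    obtain ⟨g, hg, hle⟩ := exists_minGen_le haI
    exact monF_mem_of_le (Ideal.subset_span ⟨g, hg, rfl⟩) hle
  · rw [Ideal.span_le]
    rintro q ⟨g, hg, rfl⟩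
    exact hg.1

lemma mem_monomialIdeal_iff {I : Ideal (MvPolynomial σ k)} (hI : IsMonomialIdeal I)
    {p : MvPolynomial σ k} :
    p ∈ I ↔ ∀ c ∈ p.support, ∃ g ∈ minGens I, ∀ i, g i ≤ c i := by
  constructor
  · intro hp
    rw [span_minGens hI] at hp
    exact mem_span_monF_iff.mp hp
  · intro H
    rw [span_minGens hI]
    exact mem_span_monF_iff.mpr H

lemma support_monF (c : σ → ℕ) :
    (monF k c).support = {Finsupp.equivFunOnFinite.symm c} := by
  classical
  simp [monF, mon, MvPolynomial.support_monomial]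

lemma Qset_eq {n : ℕ} {k : Type*} [Field k] (P : Fin n → Prop) (e : Fin n → (Fin n → ℕ)) :
    {q : MvPolynomial (Fin n) k | ∃ i : Fin n, P i ∧ q = monF k (e i)}
      = (monF k) '' {d | ∃ i : Fin n, P i ∧ d = e i} := by
  ext q
  constructor
  · rintro ⟨i, hi, rfl⟩; exact ⟨_, ⟨i, hi, rfl⟩, rfl⟩
  · rintro ⟨d, ⟨i, hi, rfl⟩, rfl⟩; exact ⟨i, hi, rfl⟩

lemma mem_Q_iff {n : ℕ} {k : Type*} [Field k] {l : ℕ} {v : Fin n → ℕ}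
    {p : MvPolynomial (Fin n) k} :
    p ∈ Ideal.span {q : MvPolynomial (Fin n) k |
        ∃ i : Fin n, (i : ℕ) < l ∧ q = monF k (Pi.single i (v i))} ↔
      ∀ c ∈ p.support, ∃ i : Fin n, (i : ℕ) < l ∧ v i ≤ c i := by
  rw [Qset_eq (fun i : Fin n => (i : ℕ) < l) (fun i => Pi.single i (v i)), mem_span_monF_iff]
  constructor
  · intro H c hc
    obtain ⟨d, ⟨i, hi, rfl⟩, hle⟩ := H c hc
    refine ⟨i, hi, ?_⟩
    have := hle i
    simpa using this
  · intro H c hc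
    obtain ⟨i, hi, hvi⟩ := H c hc
    refine ⟨Pi.single i (v i), ⟨i, hi, rfl⟩, fun j => ?_⟩
    rcases eq_or_ne j i with rfl | hji
    · simpa using hvi
    · simp [Pi.single_apply, hji]

lemma monF_mem_Q_iff {n : ℕ} {k : Type*} [Field k] {l : ℕ} {v : Fin n → ℕ}
    {c : Fin n → ℕ} :
    monF k c ∈ Ideal.span {q : MvPolynomial (Fin n) k |
        ∃ i : Fin n, (i : ℕ) < l ∧ q = monF k (Pi.single i (v i))} ↔
      ∃ i : Fin n, (i : ℕ) < l ∧ v i ≤ c i := by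
  rw [mem_Q_iff, support_monF]
  simp [symm_apply]

end CompAux

/-- Let `I ⊆ S` be a strongly stable ideal and `l = ν(I)`.  For
`x^a ∈ G(I)` with `ν(x^a) = l`, the ideal `𝔪^{â} = (x_1^{a_1+1}, …, x_{l-1}^{a_{l-1}+1},
x_l^{a_l})` is an irreducible component of `I`.  Conversely, if `𝔪^b` is an irreducible
component of `I` of height `l`, then `x^{b̃} ∈ G(I)` where
`b̃ = (b_1-1, …, b_{l-1}-1, b_l)`. -/
theorem component_of_top_generators {n : ℕ} {k : Type*} [Field k]
    (I : Ideal (MvPolynomial (Fin n) k)) (hss : StronglyStable I)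
    (l : ℕ) (hl0 : 0 < l) (hln : l ≤ n)
    (hnu : ∀ a ∈ minGens I, ∀ i : Fin n, 0 < a i → (i : ℕ) < l)
    (hmax : ∃ a ∈ minGens I, 0 < a ⟨l - 1, by omega⟩) :
    (∀ a ∈ minGens I, 0 < a ⟨l - 1, by omega⟩ →
      IsComponentOf
        (Ideal.span {q | ∃ i : Fin n, (i : ℕ) < l ∧
          q = monF k (Pi.single i (if (i : ℕ) + 1 = l then a i else a i + 1))}) I) ∧
    (∀ b : Fin n → ℕ, (∀ i : Fin n, (i : ℕ) < l → 0 < b i) →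
      IsComponentOf
        (Ideal.span {q | ∃ i : Fin n, (i : ℕ) < l ∧ q = monF k (Pi.single i (b i))}) I →
      (fun i : Fin n =>
        if (i : ℕ) + 1 = l then b i else if (i : ℕ) < l then b i - 1 else 0) ∈
        minGens I) := by
  classical
  obtain ⟨hImon, hstab⟩ := hss
  set L : Fin n := ⟨l - 1, by omega⟩ with hL
  have hLval : (L : ℕ) = l - 1 := rfl
  have hLl : (L : ℕ) < l := by omega
  have hjL_iff : ∀ j : Fin n, ((j : ℕ) + 1 = l) ↔ j = L := by
    intro j
    constructor
    · intro h; apply Fin.ext; omega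
    · intro h; subst h; omega
  have hsupp : ∀ g ∈ minGens I, ∀ i : Fin n, l ≤ (i : ℕ) → g i = 0 := by
    intro g hg i hi
    by_contra h
    have := hnu g hg i (Nat.pos_of_ne_zero h)
    omega
  constructor
  · -- Forward direction
    intro a ha haL
    have haL' : 0 < a L := haL
    set v : Fin n → ℕ := fun i => if (i : ℕ) + 1 = l then a i else a i + 1 with hv
    set w : Fin n → ℕ := fun j => if j = L then a j - 1 else a j with hwdef
    have hwa : ∀ j : Fin n, w j = if j = L then a j - 1 else a j := by
      intro j; rw [hwdef]
    have hva : ∀ j : Fin n, v j = if j = L then a j else a j + 1 := by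
      intro j
      simp only [hv]
      by_cases hjl : j = L
      · rw [if_pos ((hjL_iff j).mpr hjl), if_pos hjl]
      · rw [if_neg (fun h => hjl ((hjL_iff j).mp h)), if_neg hjl]
    have hwnot : monF k w ∉ I := by
      intro hc
      apply ha.2 L haL'
      convert hc using 2
      funext j
      simp only [Pi.sub_apply, Pi.single_apply, hwdef]
      split_ifs <;> omega
    have hanot : ∀ g ∈ minGens I, ∃ i : Fin n, (i : ℕ) < l ∧ v i ≤ g i := by
      intro g hg
      by_contra hcon
      push_neg at hcon
      apply hwnot
      apply CompAux.monF_mem_of_le hg.1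
      intro j
      rcases lt_or_ge ((j : ℕ)) l with hj | hj
      · have h1 := hcon j hj
        rw [hwa j]
        rw [hva j] at h1
        by_cases hjl : j = L
        · subst hjl; rw [if_pos rfl] at h1 ⊢; omega
        · rw [if_neg hjl] at h1 ⊢; omega
      · rw [hsupp g hg j hj]; exact Nat.zero_le _
    have hIQ : I ≤ Ideal.span {q | ∃ i : Fin n, (i : ℕ) < l ∧
        q = monF k (Pi.single i (v i))} := by
      intro p hp
      refine (CompAux.mem_Q_iff (l := l) (v := v)).mpr ?_
      intro c hc
      obtain ⟨g, hg, hle⟩ := (CompAux.mem_monomialIdeal_iff hImon).mp hp c hc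
      obtain ⟨i, hil, hvi⟩ := hanot g hg
      exact ⟨i, hil, le_trans hvi (hle i)⟩
    have hwQ : monF k w ∉ Ideal.span {q | ∃ i : Fin n, (i : ℕ) < l ∧
        q = monF k (Pi.single i (v i))} := by
      intro hmem
      obtain ⟨i, hil, hvi⟩ := (CompAux.monF_mem_Q_iff (l := l) (v := v)).mp hmem
      rw [hwa i] at hvi
      rw [hva i] at hvi
      by_cases hiL : i = L
      · subst hiL; rw [if_pos rfl, if_pos rfl] at hvi; omega
      · rw [if_neg hiL, if_neg hiL] at hvi; omega
    refine ⟨I ⊔ Ideal.span {monF k w}, ?_, ?_⟩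
    · apply le_antisymm
      · exact le_inf hIQ le_sup_left
      · rintro p hp
        obtain ⟨hpQ, hpJ⟩ := Submodule.mem_inf.mp hp
        obtain ⟨q, hqI, r, hr, rfl⟩ := Submodule.mem_sup.mp hpJ
        obtain ⟨h, rfl⟩ := Ideal.mem_span_singleton'.mp hr
        refine Ideal.add_mem I hqI ?_
        have hrQ : h * monF k w ∈ Ideal.span {q | ∃ i : Fin n, (i : ℕ) < l ∧
            q = monF k (Pi.single i (v i))} := by
          have heq : h * monF k w = (q + h * monF k w) - q := by ring
          rw [heq]
          exact Ideal.sub_mem _ hpQ (hIQ hqI)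
        rw [CompAux.mem_monomialIdeal_iff hImon]
        intro c hc
        have hsub := MvPolynomial.support_mul h (monF k w) hc
        rw [CompAux.support_monF] at hsub
        obtain ⟨d, hd, e, he, rfl⟩ := Finset.mem_add.mp hsub
        rw [Finset.mem_singleton] at he
        subst he
        have hcoord : ∀ j : Fin n,
            ((d + Finsupp.equivFunOnFinite.symm w) : Fin n →₀ ℕ) j = d j + w j := by
          intro j; rw [Finsupp.add_apply, CompAux.symm_apply]
        obtain ⟨i, hil, hvi⟩ := (CompAux.mem_Q_iff (l := l) (v := v)).mp hrQ _ hc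
        rw [hcoord i] at hvi
        have hdi : 0 < d i := by
          rw [hva i, hwa i] at hvi
          by_cases hiL : i = L
          · subst hiL; rw [if_pos rfl, if_pos rfl] at hvi; omega
          · rw [if_neg hiL, if_neg hiL] at hvi; omega
        by_cases hiL : i = L
        · subst hiL
          refine ⟨a, ha, fun j => ?_⟩
          rw [hcoord j, hwa j]
          by_cases hjL : j = L
          · subst hjL; rw [if_pos rfl]; omega
          · rw [if_neg hjL]; omega
        · have hiltL : i < L := by
            rw [Fin.lt_def]
            have : (i : ℕ) + 1 ≠ l := fun hcc => hiL ((hjL_iff i).mp hcc)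
            omega
          have hstab' := hstab a ha L i hiltL haL'
          obtain ⟨g, hg, hgle⟩ := CompAux.exists_minGen_le hstab'
          refine ⟨g, hg, fun j => le_trans (hgle j) ?_⟩
          rw [hcoord j, hwa j]
          simp only [Pi.add_apply, Pi.sub_apply, Pi.single_apply]
          by_cases hjL : j = L
          · subst hjL
            rw [if_pos rfl, if_neg (fun hc => hiL hc.symm), if_pos rfl]
            omega
          · by_cases hji : j = i
            · subst hji
              rw [if_neg hjL, if_pos rfl, if_neg hjL]
              omega
            · rw [if_neg hjL, if_neg hji, if_neg hjL]
              omega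
    · intro hle
      exact hwQ (hle (Submodule.mem_sup_right (Ideal.subset_span (Set.mem_singleton _))))
  · -- Converse direction
    intro b hbpos hcomp
    obtain ⟨J, hIJ, hJQ⟩ := hcomp
    have hIQ : I ≤ Ideal.span {q | ∃ i : Fin n, (i : ℕ) < l ∧
        q = monF k (Pi.single i (b i))} := by
      rw [hIJ]; exact inf_le_left
    obtain ⟨f, hfJ, hfQ⟩ := SetLike.not_le_iff_exists.mp hJQ
    set w : Fin n → ℕ := fun j => if (j : ℕ) < l then b j - 1 else 0 with hwdef
    have hwI : monF k w ∉ I := by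
      intro hmem
      obtain ⟨i, hil, hv⟩ := (CompAux.monF_mem_Q_iff (l := l) (v := b)).mp (hIQ hmem)
      have hb := hbpos i hil
      simp only [hwdef] at hv
      rw [if_pos hil] at hv
      omega
    simp only [minGens, Set.mem_setOf_eq]
    constructor
    · -- x^{b~} ∈ I
      have hfQ' : ∃ c ∈ f.support, ∀ i : Fin n, (i : ℕ) < l → (c : Fin n →₀ ℕ) i < b i := by
        by_contra hcon
        push_neg at hcon
        apply hfQ
        refine (CompAux.mem_Q_iff (l := l) (v := b)).mpr ?_
        intro c hc
        obtain ⟨i, hil, hbi⟩ := hcon c hc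
        exact ⟨i, hil, hbi⟩
      set T := f.support.filter (fun c => ∀ i : Fin n, (i : ℕ) < l → c i < b i) with hT
      have hTne : T.Nonempty := by
        obtain ⟨c, hc, hcc⟩ := hfQ'
        exact ⟨c, Finset.mem_filter.mpr ⟨hc, hcc⟩⟩
      obtain ⟨cs, hcsT, hcsmin⟩ := Finset.exists_min_image T (fun c => c L) hTne
      rw [Finset.mem_filter] at hcsT
      obtain ⟨hcs_supp, hcs_lt⟩ := hcsT
      set u : Fin n → ℕ := fun j =>
        if (j : ℕ) + 1 = l then b j - cs j else if (j : ℕ) < l then b j - 1 - cs j else 0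
        with hu
      have hufQ : monF k u * f ∈ Ideal.span {q | ∃ i : Fin n, (i : ℕ) < l ∧
          q = monF k (Pi.single i (b i))} := by
        refine (CompAux.mem_Q_iff (l := l) (v := b)).mpr ?_
        intro c hc
        have hsub := MvPolynomial.support_mul (monF k u) f hc
        rw [CompAux.support_monF] at hsub
        obtain ⟨e0, he0, d, hd, rfl⟩ := Finset.mem_add.mp hsub
        rw [Finset.mem_singleton] at he0
        subst he0
        have hcoord : ∀ j : Fin n,
            ((Finsupp.equivFunOnFinite.symm u + d) : Fin n →₀ ℕ) j = u j + d j := by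
          intro j; rw [Finsupp.add_apply, CompAux.symm_apply]
        by_cases hdQ : ∀ i : Fin n, (i : ℕ) < l → d i < b i
        · have hdT : d ∈ T := Finset.mem_filter.mpr ⟨hd, hdQ⟩
          have hmin := hcsmin d hdT
          refine ⟨L, hLl, ?_⟩
          rw [hcoord L]
          have hcsL := hcs_lt L hLl
          have huL : u L = b L - cs L := by
            simp only [hu]
            rw [if_pos (by omega : (L : ℕ) + 1 = l)]
          rw [huL]
          omega
        · push_neg at hdQ
          obtain ⟨i, hil, hbi⟩ := hdQ
          refine ⟨i, hil, ?_⟩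
          rw [hcoord i]
          omega
      have hufI : monF k u * f ∈ I := by
        rw [hIJ]
        exact Submodule.mem_inf.mpr ⟨hufQ, J.mul_mem_left _ hfJ⟩
      have hmem : (Finsupp.equivFunOnFinite.symm u + cs) ∈ (monF k u * f).support := by
        rw [MvPolynomial.mem_support_iff]
        have hco : (monF k u * f).coeff (Finsupp.equivFunOnFinite.symm u + cs)
            = 1 * f.coeff cs := by
          have hmo : monF k u = MvPolynomial.monomial (Finsupp.equivFunOnFinite.symm u) 1 := rfl
          rw [hmo, MvPolynomial.coeff_monomial_mul]
        rw [hco, one_mul]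
        exact MvPolynomial.mem_support_iff.mp hcs_supp
      obtain ⟨g, hg, hgle⟩ := (CompAux.mem_monomialIdeal_iff hImon).mp hufI _ hmem
      apply CompAux.monF_mem_of_le hg.1
      intro j
      have hgj := hgle j
      rw [Finsupp.add_apply, CompAux.symm_apply] at hgj
      rcases lt_or_ge ((j : ℕ)) l with hj | hj
      · have hcsj := hcs_lt j hj
        by_cases hjL : (j : ℕ) + 1 = l
        · have huj : u j = b j - cs j := by simp only [hu]; rw [if_pos hjL]
          rw [huj] at hgj
          simp only [if_pos hjL]
          omega
        · have huj : u j = b j - 1 - cs j := by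
            simp only [hu]; rw [if_neg hjL, if_pos hj]
          rw [huj] at hgj
          simp only [if_neg hjL, if_pos hj]
          omega
      · rw [hsupp g hg j hj]
        exact Nat.zero_le _
    · -- minimality
      intro i hipos
      rcases lt_or_ge ((i : ℕ)) l with hil | hil
      swap
      · exfalso
        have h1 : (i : ℕ) + 1 ≠ l := by omega
        have h2 : ¬ ((i : ℕ) < l) := by omega
        simp only [if_neg h1, if_neg h2] at hipos
        omega
      intro hmem2
      apply hwI
      by_cases hiL : (i : ℕ) + 1 = l
      · -- removing the last variable gives exactly w
        have hiLL : i = L := (hjL_iff i).mp hiL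
        convert hmem2 using 2
        funext j
        simp only [Pi.sub_apply, Pi.single_apply, hwdef]
        by_cases hji : j = i
        · rw [if_pos hji, hji, if_pos hil, if_pos hiL]
        · rw [if_neg hji]
          by_cases hjl : (j : ℕ) < l
          · have hj1 : (j : ℕ) + 1 ≠ l := by
              intro hc
              exact hji (((hjL_iff j).mp hc).trans hiLL.symm)
            rw [if_pos hjl, if_neg hj1]
            omega
          · have hj1 : (j : ℕ) + 1 ≠ l := by omega
            rw [if_neg hjl, if_neg hj1]
            omega
      · -- i is strictly below the last variable
        have hiltL : i < L := by
          rw [Fin.lt_def]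
          omega
        have hipos' : 0 < b i - 1 := by
          simp only [if_neg hiL, if_pos hil] at hipos
          exact hipos
        obtain ⟨g, hg, hgle⟩ := CompAux.exists_minGen_le hmem2
        have hcoordg : ∀ j : Fin n,
            g j ≤ (if (j : ℕ) + 1 = l then b j else if (j : ℕ) < l then b j - 1 else 0)
              - (if j = i then 1 else 0) := by
          intro j
          have hgj := hgle j
          simp only [Pi.sub_apply, Pi.single_apply] at hgj
          split_ifs at hgj ⊢ <;> omega
        have hgL : g L ≤ b L := by
          have h := le_trans (hcoordg L) (Nat.sub_le _ _)
          rw [if_pos (by omega : (L : ℕ) + 1 = l)] at h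
          exact h
        have hbL : 0 < b L := hbpos L hLl
        rcases lt_or_ge (g L) (b L) with h1 | h2
        · -- g already fits below w
          apply CompAux.monF_mem_of_le hg.1
          intro j
          have hgj' := le_trans (hcoordg j) (Nat.sub_le _ _)
          simp only [hwdef]
          rcases lt_or_ge ((j : ℕ)) l with hjl | hjl
          · rw [if_pos hjl]
            by_cases hj1 : (j : ℕ) + 1 = l
            · have hjL : j = L := (hjL_iff j).mp hj1
              subst hjL
              omega
            · rw [if_neg hj1, if_pos hjl] at hgj'
              omega
          · rw [if_neg (by omega : ¬ ((j : ℕ) < l))]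
            have h0 := hsupp g hg j hjl
            omega
        · -- use strong stability to move the last variable down to i
          have hgLpos : 0 < g L := by omega
          have hstab' := hstab g hg L i hiltL hgLpos
          apply CompAux.monF_mem_of_le hstab'
          intro j
          simp only [Pi.add_apply, Pi.sub_apply, Pi.single_apply, hwdef]
          have hineL : i ≠ L := ne_of_lt hiltL
          by_cases hjL : j = L
          · rw [if_pos hjL, if_neg (fun hc : j = i => hineL (hc.symm.trans hjL)), hjL,
              if_pos (by omega : (L : ℕ) < l)]
            omega
          · rw [if_neg hjL]
            by_cases hji : j = i
            · have h := hcoordg i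
              rw [if_neg hiL, if_pos hil, if_pos rfl] at h
              rw [hji, if_pos rfl, if_pos hil]
              omega
            · have h := le_trans (hcoordg j) (Nat.sub_le _ _)
              rw [if_neg hji]
              rcases lt_or_ge ((j : ℕ)) l with hjl | hjl
              · have hj1 : (j : ℕ) + 1 ≠ l := fun hc => hjL ((hjL_iff j).mp hc)
                rw [if_neg hj1, if_pos hjl] at h
                rw [if_pos hjl]
                omega
              · rw [if_neg (by omega : ¬ ((j : ℕ) < l))]
                have h0 := hsupp g hg j hjl
                omega


end
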